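/- If X ~ ESGT(θ, σ, ε, α, q) and r is a positive even integer with qα > r, then E[(X−θ)^r] = 2^{r/2−1} q^{r/α} σ^r Γ((r+1)/α) Γ(q − r/α) [(1−ε)^{r+1} + (1+ε)^{r+1}] / (Γ(1/α) Γ(q)). -/

import Mathlib

open Real MeasureTheory Set

/-- The Beta function. -/
noncomputable def betaFn (a b : ℝ) : ℝ := Real.Gamma a * Real.Gamma b / Real.Gamma (a + b)

/-- The ESGT density. -/
noncomputable def esgtPDF (θ σ ε α q : ℝ) (x : ℝ) : ℝ :=
  α / (2 * Real.sqrt 2 * betaFn (1 / α) q * q ^ (1 / α) * σ) *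
    (1 + |x - θ| ^ α /
        ((2 : ℝ) ^ (α / 2) * (1 - (if x < θ then (-1 : ℝ) else 1) * ε) ^ α * q * σ ^ α)) ^
      (-((α * q + 1) / α))


section ESGTaux

lemma beta_interval {a b : ℝ} (ha : 0 < a) (hb : 0 < b) :
    ∫ x in (0:ℝ)..1, x ^ (a-1) * (1-x) ^ (b-1) =
      Real.Gamma a * Real.Gamma b / Real.Gamma (a+b) := by
  have h := Complex.Gamma_mul_Gamma_eq_betaIntegral (s := (a:ℂ)) (t := (b:ℂ))
    (by simpa using ha) (by simpa using hb)
  rw [Complex.betaIntegral] at h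
  have heq : (∫ x in (0:ℝ)..1, (x:ℂ) ^ ((a:ℂ)-1) * (1-(x:ℂ)) ^ ((b:ℂ)-1)) =
      ((∫ x in (0:ℝ)..1, x ^ (a-1) * (1-x) ^ (b-1) : ℝ) : ℂ) := by
    rw [← intervalIntegral.integral_ofReal]
    apply intervalIntegral.integral_congr
    intro x hx
    rw [Set.uIcc_of_le (by norm_num : (0:ℝ) ≤ 1)] at hx
    simp only []
    rw [Complex.ofReal_mul, Complex.ofReal_cpow hx.1, Complex.ofReal_cpow (by linarith [hx.2] : (0:ℝ) ≤ 1 - x)]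
    push_cast
    ring
  rw [heq, ← Complex.ofReal_add, Complex.Gamma_ofReal, Complex.Gamma_ofReal, Complex.Gamma_ofReal] at h
  have h2 : Real.Gamma a * Real.Gamma b =
      Real.Gamma (a+b) * ∫ x in (0:ℝ)..1, x ^ (a-1) * (1-x) ^ (b-1) := by
    exact_mod_cast h
  have hG : Real.Gamma (a+b) ≠ 0 := (Real.Gamma_pos_of_pos (by linarith)).ne'
  rw [h2]
  field_simp

lemma integrableOn_betaIoi {a b : ℝ} (ha : 0 < a) (hb : 0 < b) :
    IntegrableOn (fun u : ℝ => u ^ (a-1) * (1+u) ^ (-(a+b))) (Set.Ioi 0) := by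
  have h1 : IntegrableOn (fun u : ℝ => u ^ (a-1) * (1+u) ^ (-(a+b))) (Set.Ioc 0 1) := by
    have hi : IntegrableOn (fun u : ℝ => u ^ (a-1)) (Set.Ioc 0 1) := by
      have := intervalIntegral.intervalIntegrable_rpow' (a := (0:ℝ)) (b := 1) (r := a - 1) (by linarith)
      rw [intervalIntegrable_iff_integrableOn_Ioc_of_le (by norm_num)] at this
      exact this
    apply Integrable.mono hi
    · apply AEMeasurable.aestronglyMeasurable
      fun_prop
    · filter_upwards [ae_restrict_mem measurableSet_Ioc] with u hu
      have hu0 : 0 < u := hu.1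
      rw [norm_mul, norm_of_nonneg (rpow_nonneg hu0.le _), norm_of_nonneg (rpow_nonneg (by linarith) _)]
      nth_rewrite 2 [show u ^ (a-1) = u ^ (a-1) * 1 by ring]
      gcongr
      exact Real.rpow_le_one_of_one_le_of_nonpos (by linarith) (by linarith)
  have h2 : IntegrableOn (fun u : ℝ => u ^ (a-1) * (1+u) ^ (-(a+b))) (Set.Ioi 1) := by
    have hi : IntegrableOn (fun u : ℝ => u ^ (-b-1)) (Set.Ioi 1) :=
      integrableOn_Ioi_rpow_of_lt (by linarith) one_pos
    apply Integrable.mono hi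
    · apply AEMeasurable.aestronglyMeasurable
      fun_prop
    · filter_upwards [ae_restrict_mem measurableSet_Ioi] with u hu
      have hu0 : (0:ℝ) < u := lt_trans one_pos hu
      rw [norm_mul, norm_of_nonneg (rpow_nonneg hu0.le _), norm_of_nonneg (rpow_nonneg (by linarith) _),
        norm_of_nonneg (rpow_nonneg hu0.le _)]
      calc u ^ (a-1) * (1+u) ^ (-(a+b)) ≤ u ^ (a-1) * u ^ (-(a+b)) :=
            mul_le_mul_of_nonneg_left (Real.rpow_le_rpow_of_nonpos hu0 (by linarith) (by linarith)) (rpow_nonneg hu0.le _)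
        _ = u ^ (-b-1) := by rw [← Real.rpow_add hu0]; ring_nf
  have : Set.Ioi (0:ℝ) = Set.Ioc 0 1 ∪ Set.Ioi 1 := by
    rw [Set.Ioc_union_Ioi_eq_Ioi]; norm_num
  rw [this]
  exact h1.union h2

lemma image_div_one_sub : (fun t : ℝ => t / (1 - t)) '' Set.Ioo 0 1 = Set.Ioi 0 := by
  ext u
  constructor
  · rintro ⟨t, ⟨ht0, ht1⟩, rfl⟩
    exact div_pos ht0 (by linarith)
  · intro hu
    refine ⟨u / (1 + u), ⟨div_pos hu (by linarith [mem_Ioi.mp hu]), ?_⟩, ?_⟩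
    · rw [div_lt_one (by linarith [mem_Ioi.mp hu])]; linarith [mem_Ioi.mp hu]
    · have h1u : (0:ℝ) < 1 + u := by linarith [mem_Ioi.mp hu]
      field_simp
      ring

lemma betaIoi {a b : ℝ} (ha : 0 < a) (hb : 0 < b) :
    ∫ u in Set.Ioi (0:ℝ), u ^ (a-1) * (1+u) ^ (-(a+b)) =
      Real.Gamma a * Real.Gamma b / Real.Gamma (a+b) := by
  have hderiv : ∀ t ∈ Set.Ioo (0:ℝ) 1,
      HasDerivWithinAt (fun t : ℝ => t / (1 - t)) (1 / (1 - t) ^ 2) (Set.Ioo 0 1) t := by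
    intro t ht
    have h1t : (1:ℝ) - t ≠ 0 := (by linarith [ht.2] : (0:ℝ) < 1 - t).ne'
    have := (hasDerivAt_id t).div ((hasDerivAt_const t (1:ℝ)).sub (hasDerivAt_id t)) h1t
    refine this.hasDerivWithinAt.congr_deriv ?_
    simp
  have hinj : Set.InjOn (fun t : ℝ => t / (1 - t)) (Set.Ioo 0 1) := by
    intro s hs t ht h
    have h1s : (1:ℝ) - s ≠ 0 := (by linarith [hs.2] : (0:ℝ) < 1 - s).ne'
    have h1t : (1:ℝ) - t ≠ 0 := (by linarith [ht.2] : (0:ℝ) < 1 - t).ne'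
    field_simp at h
    linarith
  have := integral_image_eq_integral_abs_deriv_smul measurableSet_Ioo hderiv hinj
    (fun u : ℝ => u ^ (a-1) * (1+u) ^ (-(a+b)))
  rw [image_div_one_sub] at this
  rw [this]
  have heq : ∀ t ∈ Set.Ioo (0:ℝ) 1,
      |1 / (1 - t) ^ 2| • ((t / (1-t)) ^ (a-1) * (1 + t / (1-t)) ^ (-(a+b))) =
        t ^ (a-1) * (1-t) ^ (b-1) := by
    intro t ht
    have ht0 : (0:ℝ) < t := ht.1
    have h1t : (0:ℝ) < 1 - t := by linarith [ht.2]
    have h1 : 1 + t / (1 - t) = (1 - t)⁻¹ := by field_simp; ring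
    have e1 : (t / (1-t)) ^ (a-1) = t ^ (a-1) * (1-t) ^ (-(a-1)) := by
      rw [Real.div_rpow ht0.le h1t.le, Real.rpow_neg h1t.le, div_eq_mul_inv]
    have e2 : (1 + t / (1-t)) ^ (-(a+b)) = (1-t) ^ (a+b) := by
      rw [h1, Real.inv_rpow h1t.le, ← Real.rpow_neg h1t.le, neg_neg]
    have e3 : |1 / (1 - t) ^ 2| = (1-t) ^ (-2 : ℝ) := by
      rw [abs_of_pos (by positivity), one_div, ← Real.rpow_natCast (1-t) 2,
        ← Real.rpow_neg h1t.le]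
      norm_num
    have key : (-2 : ℝ) + -(a-1) + (a+b) = b - 1 := by ring
    calc |1 / (1 - t) ^ 2| • ((t / (1-t)) ^ (a-1) * (1 + t / (1-t)) ^ (-(a+b)))
        = (1-t) ^ (-2:ℝ) * ((t ^ (a-1) * (1-t) ^ (-(a-1))) * (1-t) ^ (a+b)) := by
          rw [smul_eq_mul, e3, e1, e2]
      _ = t ^ (a-1) * ((1-t) ^ (-2:ℝ) * (1-t) ^ (-(a-1)) * (1-t) ^ (a+b)) := by ring
      _ = t ^ (a-1) * (1-t) ^ ((-2:ℝ) + -(a-1) + (a+b)) := by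
          rw [← Real.rpow_add h1t, ← Real.rpow_add h1t]
      _ = t ^ (a-1) * (1-t) ^ (b-1) := by rw [key]
  rw [setIntegral_congr_fun measurableSet_Ioo heq]
  rw [← beta_interval ha hb, intervalIntegral.integral_of_le (by norm_num : (0:ℝ) ≤ 1),
    integral_Ioc_eq_integral_Ioo]

example : True := trivial

section
variable {α q c : ℝ}

lemma image_rpow_scale (hα : 0 < α) (hc : 0 < c) :
    (fun u : ℝ => c ^ (1/α) * u ^ (1/α)) '' Set.Ioi 0 = Set.Ioi 0 := by
  ext y
  constructor
  · rintro ⟨u, hu, rfl⟩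
    exact mul_pos (rpow_pos_of_pos hc _) (rpow_pos_of_pos hu _)
  · intro hy
    have hy0 : (0:ℝ) < y := hy
    refine ⟨(y / c ^ (1/α)) ^ α, rpow_pos_of_pos (div_pos hy0 (rpow_pos_of_pos hc _)) _, ?_⟩
    have h0 : (0:ℝ) ≤ y / c ^ (1/α) := (div_pos hy0 (rpow_pos_of_pos hc _)).le
    simp only
    rw [← Real.rpow_mul h0, mul_one_div, div_self hα.ne', Real.rpow_one]
    field_simp

lemma deriv_rpow_scale (hα : 0 < α) (hc : 0 < c) :
    ∀ u ∈ Set.Ioi (0:ℝ), HasDerivWithinAt (fun u : ℝ => c ^ (1/α) * u ^ (1/α))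
      (c ^ (1/α) * ((1/α) * u ^ (1/α - 1))) (Set.Ioi 0) u := by
  intro u hu
  exact (((Real.hasDerivAt_rpow_const (p := 1/α) (Or.inl (ne_of_gt hu))).const_mul
    (c ^ (1/α)))).hasDerivWithinAt

lemma inj_rpow_scale (hα : 0 < α) (hc : 0 < c) :
    Set.InjOn (fun u : ℝ => c ^ (1/α) * u ^ (1/α)) (Set.Ioi 0) := by
  intro s hs t ht h
  simp only at h
  have h2 := mul_left_cancel₀ (rpow_pos_of_pos hc (1/α)).ne' h
  have := Real.rpow_left_injOn (x := 1/α) (by positivity : (1/α:ℝ) ≠ 0)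
  exact this (show (0:ℝ) ≤ s from le_of_lt hs) (show (0:ℝ) ≤ t from le_of_lt ht) (by simpa [abs_of_pos (show (0:ℝ) < s from hs), abs_of_pos (show (0:ℝ) < t from ht)] using h2)

lemma J_pointwise (hα : 0 < α) (hq : 0 < q) (hc : 0 < c) (r : ℕ) :
    ∀ u ∈ Set.Ioi (0:ℝ),
      |c ^ (1/α) * ((1/α) * u ^ (1/α - 1))| •
        ((c ^ (1/α) * u ^ (1/α)) ^ r *
          (1 + (c ^ (1/α) * u ^ (1/α)) ^ α / c) ^ (-((α*q+1)/α))) =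
      (c ^ (((r:ℝ)+1)/α) / α) *
        (u ^ ((((r:ℝ)+1)/α) - 1) *
          (1+u) ^ (-((((r:ℝ)+1)/α) + (q - (r:ℝ)/α)))) := by
  intro u hu
  have hu0 : (0:ℝ) < u := hu
  have hfc : (0:ℝ) < c ^ (1/α) := rpow_pos_of_pos hc _
  have hfu : (0:ℝ) < u ^ (1/α) := rpow_pos_of_pos hu0 _
  have h1 : (c ^ (1/α) * u ^ (1/α)) ^ α = c * u := by
    rw [Real.mul_rpow hfc.le hfu.le, ← Real.rpow_mul hc.le, ← Real.rpow_mul hu0.le,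
      one_div_mul_cancel hα.ne', Real.rpow_one, Real.rpow_one]
  have h2 : (c ^ (1/α) * u ^ (1/α)) ^ r = c ^ ((r:ℝ)/α) * u ^ ((r:ℝ)/α) := by
    rw [← Real.rpow_natCast (c ^ (1/α) * u ^ (1/α)) r, Real.mul_rpow hfc.le hfu.le,
      ← Real.rpow_mul hc.le, ← Real.rpow_mul hu0.le,
      show (1/α)*(r:ℝ) = (r:ℝ)/α by ring]
  have h3 : |c ^ (1/α) * ((1/α) * u ^ (1/α - 1))| = c ^ (1/α) * ((1/α) * u ^ (1/α - 1)) :=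
    abs_of_pos (by positivity)
  have hexp : -((α*q+1)/α) = -((((r:ℝ)+1)/α) + (q - (r:ℝ)/α)) := by
    field_simp
    ring
  rw [smul_eq_mul, h3, h1, h2, show c * u / c = u by field_simp, hexp,
    show ((r:ℝ)+1)/α = (r:ℝ)/α + 1/α by ring, Real.rpow_add hc,
    show (r:ℝ)/α + 1/α - 1 = (1/α - 1) + (r:ℝ)/α by ring, Real.rpow_add hu0]
  ring
lemma hb_pos (hα : 0 < α) {r : ℕ} (hqr : (r:ℝ) < q*α) : 0 < q - (r:ℝ)/α := by
  have : (r:ℝ)/α < q := (div_lt_iff₀ hα).mpr (by linarith)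
  linarith

lemma J_eval (hα : 0 < α) (hq : 0 < q) (hc : 0 < c) (r : ℕ) (hqr : (r:ℝ) < q*α) :
    ∫ y in Set.Ioi (0:ℝ), y ^ r * (1 + y ^ α / c) ^ (-((α*q+1)/α)) =
      c ^ (((r:ℝ)+1)/α) / α *
        (Real.Gamma (((r:ℝ)+1)/α) * Real.Gamma (q - (r:ℝ)/α) / Real.Gamma (q + 1/α)) := by
  have ha : (0:ℝ) < ((r:ℝ)+1)/α := by positivity
  have hb := hb_pos (q := q) hα hqr
  have key := integral_image_eq_integral_abs_deriv_smul measurableSet_Ioi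
    (deriv_rpow_scale hα hc) (inj_rpow_scale hα hc)
    (fun y : ℝ => y ^ r * (1 + y ^ α / c) ^ (-((α*q+1)/α)))
  rw [image_rpow_scale hα hc] at key
  rw [key, setIntegral_congr_fun measurableSet_Ioi (J_pointwise hα hq hc r),
    integral_const_mul, betaIoi ha hb,
    show ((r:ℝ)+1)/α + (q - (r:ℝ)/α) = q + 1/α by field_simp; ring]

lemma J_integrable (hα : 0 < α) (hq : 0 < q) (hc : 0 < c) (r : ℕ) (hqr : (r:ℝ) < q*α) :
    IntegrableOn (fun y : ℝ => y ^ r * (1 + y ^ α / c) ^ (-((α*q+1)/α))) (Set.Ioi 0) := by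
  have ha : (0:ℝ) < ((r:ℝ)+1)/α := by positivity
  have hb := hb_pos (q := q) hα hqr
  have key := integrableOn_image_iff_integrableOn_abs_deriv_smul measurableSet_Ioi
    (deriv_rpow_scale hα hc) (inj_rpow_scale hα hc)
    (fun y : ℝ => y ^ r * (1 + y ^ α / c) ^ (-((α*q+1)/α)))
  rw [image_rpow_scale hα hc] at key
  rw [key]
  apply IntegrableOn.congr_fun _ (fun u hu => (J_pointwise hα hq hc r u hu).symm) measurableSet_Ioi
  exact (integrableOn_betaIoi ha hb).const_mul _
end

end ESGTaux

lemma cpow_eval {α q σ : ℝ} (hα : 0 < α) (hq : 0 < q) (hσ : 0 < σ) {d : ℝ} (hd : 0 < d) (r : ℕ) :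
    ((2:ℝ) ^ (α/2) * d ^ α * q * σ ^ α) ^ (((r:ℝ)+1)/α) =
      2 ^ (((r:ℝ)+1)/2) * d ^ (r+1) * q ^ (((r:ℝ)+1)/α) * σ ^ (r+1) := by
  have h2 : (0:ℝ) < (2:ℝ) ^ (α/2) := rpow_pos_of_pos two_pos _
  have hdα : (0:ℝ) < d ^ α := rpow_pos_of_pos hd _
  have hσα : (0:ℝ) < σ ^ α := rpow_pos_of_pos hσ _
  rw [Real.mul_rpow (by positivity) hσα.le, Real.mul_rpow (by positivity) hq.le,
    Real.mul_rpow h2.le hdα.le, ← Real.rpow_mul (by norm_num : (0:ℝ) ≤ 2),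
    ← Real.rpow_mul hd.le, ← Real.rpow_mul hσ.le,
    show α/2 * (((r:ℝ)+1)/α) = ((r:ℝ)+1)/2 by field_simp,
    show α * (((r:ℝ)+1)/α) = ((r:ℝ)+1) by field_simp,
    show ((r:ℝ)+1) = ((r+1 : ℕ):ℝ) by push_cast; ring,
    Real.rpow_natCast, Real.rpow_natCast]

set_option maxHeartbeats 2000000 in
theorem esgt_central_moment (θ σ ε α q : ℝ) (hσ : 0 < σ) (hε : ε ∈ Set.Ioo (-1 : ℝ) 1)
    (hα : 0 < α) (hq : 0 < q) (r : ℕ) (hr : 0 < r) (hre : Even r) (hqr : (r : ℝ) < q * α) :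
    ∫ x : ℝ, (x - θ) ^ r * esgtPDF θ σ ε α q x =
      (2 : ℝ) ^ ((r : ℝ) / 2 - 1) * q ^ ((r : ℝ) / α) * σ ^ r *
        Real.Gamma (((r : ℝ) + 1) / α) * Real.Gamma (q - (r : ℝ) / α) *
        ((1 - ε) ^ (r + 1) + (1 + ε) ^ (r + 1)) / (Real.Gamma (1 / α) * Real.Gamma q) := by
  obtain ⟨hε1, hε2⟩ := hε
  have hme : (0:ℝ) < 1 - ε := by linarith
  have hpe : (0:ℝ) < 1 + ε := by linarith
  set C : ℝ := α / (2 * Real.sqrt 2 * betaFn (1 / α) q * q ^ (1 / α) * σ) with hC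
  set cp : ℝ := (2:ℝ) ^ (α/2) * (1 - ε) ^ α * q * σ ^ α with hcp
  set cm : ℝ := (2:ℝ) ^ (α/2) * (1 + ε) ^ α * q * σ ^ α with hcm
  have hcp0 : 0 < cp := by rw [hcp]; positivity
  have hcm0 : 0 < cm := by rw [hcm]; positivity
  set g : ℝ → ℝ := fun y => y ^ r *
    (C * (1 + |y| ^ α /
      ((2:ℝ) ^ (α/2) * (1 - (if y < 0 then (-1:ℝ) else 1) * ε) ^ α * q * σ ^ α)) ^ (-((α * q + 1) / α))) with hg
  -- step 1 & 2: translate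
  have step1 : ∫ x : ℝ, (x - θ) ^ r * esgtPDF θ σ ε α q x = ∫ y : ℝ, g y := by
    rw [← integral_sub_right_eq_self g θ]
    congr 1
    ext x
    simp only [hg, esgtPDF, sub_neg, hC]
  -- identification on positive side
  have hgpos : ∀ y ∈ Set.Ioi (0:ℝ), g y = C * (y ^ r * (1 + y ^ α / cp) ^ (-((α * q + 1) / α))) := by
    intro y hy
    have hy0 : (0:ℝ) < y := hy
    simp only [hg, if_neg (not_lt.mpr hy0.le), abs_of_pos hy0, one_mul, hcp]
    ring
  have hgneg : ∀ y ∈ Set.Ioi (0:ℝ), g (-y) = C * (y ^ r * (1 + y ^ α / cm) ^ (-((α * q + 1) / α))) := by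
    intro y hy
    have hy0 : (0:ℝ) < y := hy
    simp only [hg, if_pos (by linarith : -y < 0), abs_neg, abs_of_pos hy0, hcm,
      hre.neg_pow, neg_one_mul, sub_neg_eq_add]
    ring
  -- integrability
  have hgneg' : ∀ y ∈ Set.Ioi (0:ℝ), |(-1:ℝ)| • g (-y) = C * (y ^ r * (1 + y ^ α / cm) ^ (-((α * q + 1) / α))) := by
    intro y hy
    rw [abs_neg, abs_one, one_smul, hgneg y hy]
  have hJp : IntegrableOn (fun y => C * (y ^ r * (1 + y ^ α / cp) ^ (-((α * q + 1) / α)))) (Set.Ioi 0) :=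
    (J_integrable hα hq hcp0 r hqr).const_mul C
  have hJm : IntegrableOn (fun y => C * (y ^ r * (1 + y ^ α / cm) ^ (-((α * q + 1) / α)))) (Set.Ioi 0) :=
    (J_integrable hα hq hcm0 r hqr).const_mul C
  have hIpos : IntegrableOn g (Set.Ioi 0) :=
    IntegrableOn.congr_fun hJp (fun y hy => (hgpos y hy).symm) measurableSet_Ioi
  have hIci : IntegrableOn g (Set.Ici 0) := (integrableOn_Ici_iff_integrableOn_Ioi enorm_ne_top).mpr hIpos
  have hnegd : ∀ y ∈ Set.Ioi (0:ℝ), HasDerivWithinAt (fun y : ℝ => -y) (-1 : ℝ) (Set.Ioi 0) y :=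
    fun y _ => (hasDerivAt_neg y).hasDerivWithinAt
  have hnegim : (fun y : ℝ => -y) '' Set.Ioi 0 = Set.Iio 0 := by
    simpa using Set.image_neg_Ioi (a := (0:ℝ))
  have hIneg : IntegrableOn g (Set.Iio 0) := by
    rw [← hnegim,
      integrableOn_image_iff_integrableOn_abs_deriv_smul measurableSet_Ioi hnegd
        (neg_injective.injOn) g]
    exact IntegrableOn.congr_fun hJm (fun y hy => (hgneg' y hy).symm) measurableSet_Ioi
  -- split
  have step2 : ∫ y : ℝ, g y = (∫ y in Set.Iio (0:ℝ), g y) + ∫ y in Set.Ici (0:ℝ), g y :=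
    (intervalIntegral.integral_Iio_add_Ici hIneg hIci).symm
  have negint : ∫ y in Set.Iio (0:ℝ), g y =
      C * (cm ^ (((r:ℝ)+1)/α) / α *
        (Real.Gamma (((r:ℝ)+1)/α) * Real.Gamma (q - (r:ℝ)/α) / Real.Gamma (q + 1/α))) := by
    rw [← hnegim, integral_image_eq_integral_abs_deriv_smul measurableSet_Ioi hnegd
      (neg_injective.injOn) g]
    rw [setIntegral_congr_fun measurableSet_Ioi (g := fun y =>
        C * (y ^ r * (1 + y ^ α / cm) ^ (-((α * q + 1) / α)))) hgneg', integral_const_mul,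
      J_eval hα hq hcm0 r hqr]
  have posint : ∫ y in Set.Ici (0:ℝ), g y =
      C * (cp ^ (((r:ℝ)+1)/α) / α *
        (Real.Gamma (((r:ℝ)+1)/α) * Real.Gamma (q - (r:ℝ)/α) / Real.Gamma (q + 1/α))) := by
    rw [integral_Ici_eq_integral_Ioi,
      setIntegral_congr_fun measurableSet_Ioi (g := fun y =>
        C * (y ^ r * (1 + y ^ α / cp) ^ (-((α * q + 1) / α)))) hgpos, integral_const_mul,
      J_eval hα hq hcp0 r hqr]
  rw [step1, step2, negint, posint]
  have hGa : Real.Gamma (1/α) ≠ 0 := (Real.Gamma_pos_of_pos (by positivity)).ne'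
  have hGq : Real.Gamma q ≠ 0 := (Real.Gamma_pos_of_pos hq).ne'
  have hGqa : Real.Gamma (q + 1/α) ≠ 0 := (Real.Gamma_pos_of_pos (by positivity)).ne'
  have hqa : (q:ℝ) ^ ((1:ℝ)/α) ≠ 0 := (rpow_pos_of_pos hq _).ne'
  have hsq : (2:ℝ) ^ ((1:ℝ)/2) ≠ 0 := (rpow_pos_of_pos two_pos _).ne'
  rw [hcp, hcm, cpow_eval hα hq hσ hme r, cpow_eval hα hq hσ hpe r, hC, betaFn,
    Real.sqrt_eq_rpow, add_comm (1/α) q,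
    show ((r:ℝ)+1)/2 = ((r:ℝ)/2 - 1) + 1 + 1/2 by ring,
    Real.rpow_add two_pos, Real.rpow_add two_pos, Real.rpow_one,
    show ((r:ℝ)+1)/α = (r:ℝ)/α + 1/α by ring, Real.rpow_add hq, pow_succ]
  field_simp
  ring
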